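/- arXiv:1701.08014 — 5 statements merged into one kernel-verified Lean document; each statement's English description precedes it below -/
import Mathlib

section
/- Let {e_i}_{i=1}^N be an orthonormal basis of an N-dimensional real inner product space H with N > 2, and for each i let W_i = e_i^⊥ be the hyperplane orthogonal to e_i. Then for every nonempty subset I ⊆ {1,...,N-1}, the family of subspaces {W_i}_{i∈I} does not do norm retrieval. -/
open scoped RealInnerProductSpace

noncomputable section

/-- A family of subspaces of a finite-dimensional real inner product space does
norm retrieval (via their orthogonal projections) if equality of the norms of all the
orthogonal projections of two vectors implies equality of the norms of the vectors. -/
def DoesNormRetrieval {H : Type*} [NormedAddCommGroup H] [InnerProductSpace ℝ H]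
    [FiniteDimensional ℝ H] {ι : Type*} (W : ι → Submodule ℝ H) : Prop :=
  ∀ x y : H, (∀ i : ι, ‖Submodule.orthogonalProjectionOnto (W i) x‖ = ‖Submodule.orthogonalProjectionOnto (W i) y‖) →
    ‖x‖ = ‖y‖

lemma norm_sum_orthonormal {H : Type*} [NormedAddCommGroup H] [InnerProductSpace ℝ H]
    {ι : Type*} {v : ι → H} (hv : Orthonormal ℝ v) (s : Finset ι) :
    ‖∑ k ∈ s, v k‖ ^ 2 = (s.card : ℝ) := by
  classical
  have h1 : (∑ k ∈ s, v k) = ∑ k ∈ s, (1 : ℝ) • v k := by simp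
  rw [← real_inner_self_eq_norm_sq, h1, sum_inner]
  have : ∀ k ∈ s, ⟪(1:ℝ) • v k, ∑ i ∈ s, (1:ℝ) • v i⟫ = 1 := by
    intro k hk
    rw [real_inner_smul_left, hv.inner_right_sum (fun _ => (1:ℝ)) hk]
    norm_num
  rw [Finset.sum_congr rfl this]
  simp

/-- If `{e_i}_{i=1}^N` is an orthonormal basis of an `N`-dimensional real inner product
space with `N > 2` and `W_i = e_i^⊥`, then for every nonempty subset `I` of the first
`N - 1` indices, the family `{W_i}_{i ∈ I}` fails norm retrieval. -/
theorem stmt_4 {H : Type*} [NormedAddCommGroup H] [InnerProductSpace ℝ H]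
    [FiniteDimensional ℝ H] {N : ℕ} (hN : 2 < N)
    (hdim : Module.finrank ℝ H = N)
    (e : OrthonormalBasis (Fin N) ℝ H)
    (I : Set (Fin N)) (hne : I.Nonempty)
    (hI : ∀ i ∈ I, (i : ℕ) < N - 1) :
    ¬ DoesNormRetrieval (fun i : I => (ℝ ∙ e i)ᗮ) := by
  classical
  intro h
  set F : Finset (Fin N) := I.toFinite.toFinset with hF
  have hmemF : ∀ i, i ∈ F ↔ i ∈ I := fun i => Set.Finite.mem_toFinset _
  set n : ℕ := F.card with hn_def
  have hn : 0 < n := Finset.card_pos.2 ⟨hne.choose, (hmemF _).2 hne.choose_spec⟩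
  have hj : N - 1 < N := by omega
  set j : Fin N := ⟨N - 1, hj⟩ with hj_def
  have hij : ∀ i ∈ F, i ≠ j := by
    intro i hi hcontra
    have h1 := hI i ((hmemF i).1 hi)
    rw [hcontra] at h1
    simp [hj_def] at h1
  have hjF : j ∉ F := fun hc => hij j hc rfl
  set c : ℝ := (Real.sqrt n)⁻¹ with hc_def
  have hnpos : (0:ℝ) < n := by exact_mod_cast hn
  have hc2 : c ^ 2 = (n : ℝ)⁻¹ := by
    rw [hc_def, inv_pow, Real.sq_sqrt hnpos.le]
  set x : H := e j with hx_def
  set y : H := c • ∑ k ∈ insert j F, e k with hy_def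
  -- formula for the projections
  have hproj : ∀ (i : Fin N) (v : H),
      (↑(Submodule.orthogonalProjectionOnto (ℝ ∙ e i)ᗮ v) : H) = v - ⟪e i, v⟫ • e i := by
    intro i v
    rw [Submodule.orthogonalProjectionOnto_orthogonal]
    show v - (ℝ ∙ e i).starProjection v = _
    rw [Submodule.starProjection_unit_singleton ℝ (e.orthonormal.1 i)]
  -- ‖P_i x‖ = 1 for i ∈ F
  have hPx : ∀ i ∈ F, ‖Submodule.orthogonalProjectionOnto (ℝ ∙ e i)ᗮ x‖ = 1 := by
    intro i hi
    rw [show ‖Submodule.orthogonalProjectionOnto (ℝ ∙ e i)ᗮ x‖ =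
        ‖(↑(Submodule.orthogonalProjectionOnto (ℝ ∙ e i)ᗮ x) : H)‖ from rfl, hproj]
    have : ⟪e i, x⟫ = 0 := e.orthonormal.2 (hij i hi)
    rw [this]
    simp [hx_def, e.orthonormal.1 j]
  -- ‖P_i y‖ = 1 for i ∈ F
  have hPy : ∀ i ∈ F, ‖Submodule.orthogonalProjectionOnto (ℝ ∙ e i)ᗮ y‖ = 1 := by
    intro i hi
    have hiins : i ∈ insert j F := Finset.mem_insert_of_mem hi
    rw [show ‖Submodule.orthogonalProjectionOnto (ℝ ∙ e i)ᗮ y‖ =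
        ‖(↑(Submodule.orthogonalProjectionOnto (ℝ ∙ e i)ᗮ y) : H)‖ from rfl, hproj]
    have hinner : ⟪e i, y⟫ = c := by
      have h1 : (∑ k ∈ insert j F, e k) = ∑ k ∈ insert j F, (1:ℝ) • e k := by simp
      rw [hy_def, real_inner_smul_right, h1,
        e.orthonormal.inner_right_sum (fun _ => (1:ℝ)) hiins, mul_one]
    rw [hinner]
    have hrw : y - c • e i = c • ∑ k ∈ (insert j F).erase i, e k := by
      rw [hy_def, ← smul_sub, Finset.sum_erase_eq_sub hiins]
    rw [hrw, norm_smul]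
    have hcard : (((insert j F).erase i).card : ℝ) = n := by
      rw [Finset.card_erase_of_mem hiins, Finset.card_insert_of_notMem hjF]
      simp [hn_def]
    have hns := norm_sum_orthonormal e.orthonormal ((insert j F).erase i)
    rw [hcard] at hns
    have habs : |c| = c := abs_of_pos (by positivity)
    rw [show ‖c‖ = |c| from rfl, habs]
    have : (c * ‖∑ k ∈ (insert j F).erase i, e k‖) ^ 2 = 1 := by
      rw [mul_pow, hns, hc2]
      field_simp
    nlinarith [norm_nonneg (∑ k ∈ (insert j F).erase i, e k), hnpos,
      Real.sqrt_pos.2 hnpos, mul_nonneg (le_of_lt (show (0:ℝ) < c by positivity))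
        (norm_nonneg (∑ k ∈ (insert j F).erase i, e k))]
  -- apply norm retrieval
  have hxy : ‖x‖ = ‖y‖ := by
    apply h
    intro i
    rw [hPx i ((hmemF _).2 i.2), hPy i ((hmemF _).2 i.2)]
  -- derive contradiction
  have hxnorm : ‖x‖ = 1 := e.orthonormal.1 j
  have hynorm : ‖y‖ ^ 2 = ((n : ℝ) + 1) / n := by
    rw [hy_def, norm_smul, mul_pow, norm_sum_orthonormal e.orthonormal,
      Finset.card_insert_of_notMem hjF]
    rw [show ‖c‖ = |c| from rfl, abs_of_pos (show (0:ℝ) < c by positivity), hc2]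
    push_cast
    field_simp
    rfl
  rw [hxnorm] at hxy
  have : (1:ℝ) = ((n:ℝ)+1)/n := by rw [← hynorm, ← hxy]; norm_num
  field_simp at this
  linarith
end
end

section
/- For every N ≥ 2, there exist three proper subspaces W_1, W_2, W_3 of ℝ^N, each of codimension one (i.e. dim W_i = N - 1), such that the family {W_1, W_2, W_3} does norm retrieval. -/
open scoped RealInnerProductSpace

noncomputable section

/-- Pythagorean decomposition of the norm relative to the hyperplane orthogonal to `v`. -/
lemma norm_sq_decomp {N : ℕ} (v x : EuclideanSpace ℝ (Fin N)) :
    ‖x‖ ^ 2 = ⟪v, x⟫ ^ 2 / ‖v‖ ^ 2 + ‖Submodule.orthogonalProjectionOnto (ℝ ∙ v)ᗮ x‖ ^ 2 := by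
  by_cases hv : v = 0
  · subst hv
    have ht : ((ℝ ∙ (0 : EuclideanSpace ℝ (Fin N)))ᗮ : Submodule ℝ _) = ⊤ := by
      rw [Submodule.span_zero_singleton, Submodule.bot_orthogonal_eq_top]
    have hx : ‖Submodule.orthogonalProjectionOnto (ℝ ∙ (0 : EuclideanSpace ℝ (Fin N)))ᗮ x‖ = ‖x‖ := by
      rw [show ‖Submodule.orthogonalProjectionOnto (ℝ ∙ (0 : EuclideanSpace ℝ (Fin N)))ᗮ x‖
          = ‖(Submodule.orthogonalProjectionOnto (ℝ ∙ (0 : EuclideanSpace ℝ (Fin N)))ᗮ x :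
              EuclideanSpace ℝ (Fin N))‖ from rfl]
      congr 1
      refine Submodule.starProjection_eq_self_iff.mpr ?_; rw [ht]
      trivial
    rw [hx, inner_zero_left]
    norm_num
  have hv' : ‖v‖ ≠ 0 := norm_ne_zero_iff.mpr hv
  have h1 := Submodule.norm_sq_eq_add_norm_sq_projection x (ℝ ∙ v)
  have h2 : (Submodule.orthogonalProjectionOnto (ℝ ∙ v) x : EuclideanSpace ℝ (Fin N))
      = (⟪v, x⟫ / (‖v‖ ^ 2 : ℝ)) • v := Submodule.starProjection_singleton ℝ x
  have h3 : ‖Submodule.orthogonalProjectionOnto (ℝ ∙ v) x‖ ^ 2 = ⟪v, x⟫ ^ 2 / ‖v‖ ^ 2 := by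
    rw [show ‖Submodule.orthogonalProjectionOnto (ℝ ∙ v) x‖
        = ‖(Submodule.orthogonalProjectionOnto (ℝ ∙ v) x : EuclideanSpace ℝ (Fin N))‖ from rfl, h2,
      norm_smul, mul_pow, Real.norm_eq_abs, sq_abs]
    field_simp
  rw [h1, h3]

/-- For every `N ≥ 2` there are three proper subspaces of `ℝ^N` of codimension one which
do norm retrieval. -/
theorem stmt_7 (N : ℕ) (hN : 2 ≤ N) :
    ∃ W : Fin 3 → Submodule ℝ (EuclideanSpace ℝ (Fin N)),
      (∀ i, W i ≠ ⊤) ∧ (∀ i, Module.finrank ℝ (W i) = N - 1) ∧ DoesNormRetrieval W := by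
  have h0 : (0:ℕ) < N := by omega
  set i0 : Fin N := ⟨0, by omega⟩ with hi0
  set i1 : Fin N := ⟨1, by omega⟩ with hi1
  have hne : i0 ≠ i1 := by simp [hi0, hi1, Fin.ext_iff]
  set v : Fin 3 → EuclideanSpace ℝ (Fin N) :=
    ![EuclideanSpace.single i0 1, EuclideanSpace.single i1 1,
      EuclideanSpace.single i0 1 + EuclideanSpace.single i1 1] with hv
  -- inner products with an arbitrary vector
  have hinner : ∀ x : EuclideanSpace ℝ (Fin N),
      ⟪v 0, x⟫ = x i0 ∧ ⟪v 1, x⟫ = x i1 ∧ ⟪v 2, x⟫ = x i0 + x i1 := by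
    intro x
    refine ⟨?_, ?_, ?_⟩ <;>
      simp [hv, inner_add_left, EuclideanSpace.inner_single_left]
  -- norms of the v i
  have hnorm0 : ‖v 0‖ ^ 2 = 1 := by
    simp [hv, EuclideanSpace.norm_single]
  have hnorm1 : ‖v 1‖ ^ 2 = 1 := by
    simp [hv, EuclideanSpace.norm_single]
  have hnorm2 : ‖v 2‖ ^ 2 = 2 := by
    rw [← real_inner_self_eq_norm_sq]
    have := (hinner (v 2)).2.2
    rw [this]
    have hne' : i1 ≠ i0 := hne.symm
    have h2a : (v 2) i0 = 1 := by
      simp [hv, EuclideanSpace.single_apply, hne, hne']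
    have h2b : (v 2) i1 = 1 := by
      simp [hv, EuclideanSpace.single_apply, hne, hne']
    rw [h2a, h2b]; norm_num
  have hvn : ∀ i : Fin 3, 0 < ‖v i‖ ^ 2 := by
    intro i
    fin_cases i
    · show 0 < ‖v 0‖ ^ 2; rw [hnorm0]; norm_num
    · show 0 < ‖v 1‖ ^ 2; rw [hnorm1]; norm_num
    · show 0 < ‖v 2‖ ^ 2; rw [hnorm2]; norm_num
  have hv0 : ∀ i, v i ≠ 0 := by
    intro i h
    have := hvn i
    rw [h] at this
    simp at this
  refine ⟨fun i => (ℝ ∙ v i)ᗮ, ?_, ?_, ?_⟩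
  · intro i
    rw [Ne, Submodule.orthogonal_eq_top_iff, Submodule.span_singleton_eq_bot]
    exact hv0 i
  · intro i
    show Module.finrank ℝ ((ℝ ∙ v i)ᗮ : Submodule ℝ (EuclideanSpace ℝ (Fin N))) = N - 1
    have h1 : Module.finrank ℝ (ℝ ∙ v i) = 1 := finrank_span_singleton (hv0 i)
    have h2 := Submodule.finrank_add_finrank_orthogonal (K := ℝ ∙ v i)
    rw [h1, finrank_euclideanSpace_fin] at h2
    omega
  · intro x y h
    have key : ∀ i : Fin 3, ‖x‖ ^ 2 - ⟪v i, x⟫ ^ 2 / ‖v i‖ ^ 2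
        = ‖y‖ ^ 2 - ⟪v i, y⟫ ^ 2 / ‖v i‖ ^ 2 := by
      intro i
      have hx := norm_sq_decomp (v i) x
      have hy := norm_sq_decomp (v i) y
      rw [h i] at hx
      linarith [hx, hy]
    obtain ⟨hx0, hx1, hx2⟩ := hinner x
    obtain ⟨hy0, hy1, hy2⟩ := hinner y
    have k0 := key 0; have k1 := key 1; have k2 := key 2
    rw [hx0, hy0, hnorm0] at k0
    rw [hx1, hy1, hnorm1] at k1
    rw [hx2, hy2, hnorm2] at k2
    set a : ℝ := ‖x‖ ^ 2 - ‖y‖ ^ 2 with ha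
    have e0 : x i0 ^ 2 - y i0 ^ 2 = a := by field_simp at k0; linarith
    have e1 : x i1 ^ 2 - y i1 ^ 2 = a := by field_simp at k1; linarith
    have e2 : (x i0 + x i1) ^ 2 - (y i0 + y i1) ^ 2 = 2 * a := by
      field_simp at k2; linarith
    have hxy : x i0 * x i1 = y i0 * y i1 := by linear_combination (e2 - e0 - e1) / 2
    have p1 : a * (y i0 ^ 2 + y i1 ^ 2 + a) = 0 := by
      linear_combination (-(x i1 ^ 2)) * e0 - (y i0 ^ 2) * e1
        + (x i0 * x i1 + y i0 * y i1) * hxy - a * e1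
    have p2 : a * (x i0 ^ 2 + x i1 ^ 2 - a) = 0 := by
      linear_combination p1 + a * e0 + a * e1
    have psum : a * (x i0 ^ 2 + x i1 ^ 2 + y i0 ^ 2 + y i1 ^ 2) = 0 := by
      linear_combination p1 + p2
    have hA : a = 0 := by
      rcases mul_eq_zero.mp psum with h' | h'
      · exact h'
      · linarith [sq_nonneg (x i0), sq_nonneg (x i1), sq_nonneg (y i0),
          sq_nonneg (y i1), e0, h']
    have hsq : ‖x‖ ^ 2 = ‖y‖ ^ 2 := by rw [ha] at hA; linarith
    have := (sq_eq_sq_iff_abs_eq_abs ‖x‖ ‖y‖).mp hsq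
    rwa [abs_of_nonneg (norm_nonneg x), abs_of_nonneg (norm_nonneg y)] at this
end
end

section
/- Let N, L, M be positive integers and let k_1,...,k_M be positive integers with k_i ≤ N for each i and ∑_{i=1}^M k_i = L·N. Then there exist subspaces {W_i}_{i=1}^M of ℝ^N with dim W_i = k_i for each i such that the family {W_i}_{i=1}^M does norm retrieval. -/
open scoped RealInnerProductSpace

noncomputable section

theorem aux_proj_norm_sq {E : Type*} [NormedAddCommGroup E] [InnerProductSpace ℝ E]
    {U : Submodule ℝ E} [FiniteDimensional ℝ U] {ι : Type*} [Fintype ι]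
    (b : OrthonormalBasis ι ℝ U) (x : E) :
    ‖Submodule.orthogonalProjectionOnto U x‖ ^ 2 = ∑ i, ⟪(b i : E), x⟫ ^ 2 := by
  have h1 : ‖Submodule.orthogonalProjectionOnto U x‖ = ‖b.repr (Submodule.orthogonalProjectionOnto U x)‖ :=
    (b.repr.norm_map _).symm
  rw [h1, EuclideanSpace.norm_eq, Real.sq_sqrt (by positivity)]
  congr 1
  ext i
  rw [b.repr_apply_apply, Submodule.inner_orthogonalProjectionOnto_eq_of_mem_left]
  simp [Real.norm_eq_abs, sq_abs]

theorem aux_blocks_sum (kk : ℕ → ℕ) (g : ℕ → ℝ) (m : ℕ) :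
    ∑ i ∈ Finset.range m, ∑ t ∈ Finset.Ico (∑ j ∈ Finset.range i, kk j)
      (∑ j ∈ Finset.range i, kk j + kk i), g t
      = ∑ t ∈ Finset.range (∑ j ∈ Finset.range m, kk j), g t := by
  induction m with
  | zero => simp
  | succ m ih =>
      rw [Finset.sum_range_succ, ih, Finset.sum_range_succ (f := kk)]
      simp only [Finset.range_eq_Ico]
      rw [← Finset.sum_Ico_consecutive g (Nat.zero_le _) (Nat.le_add_right _ _)]

theorem aux_periodic_sum (N : ℕ) (g : ℕ → ℝ) (L : ℕ) :
    ∑ t ∈ Finset.range (L * N), g (t % N) = L * ∑ r ∈ Finset.range N, g r := by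
  induction L with
  | zero => simp
  | succ L ih =>
      rw [Nat.succ_mul, Finset.range_eq_Ico,
        ← Finset.sum_Ico_consecutive _ (Nat.zero_le _) (Nat.le_add_right (L*N) N),
        ← Finset.range_eq_Ico, ih, Finset.sum_Ico_eq_sum_range]
      have h : ∀ t ∈ Finset.range (L * N + N - L * N), g ((L * N + t) % N) = g t := by
        intro t ht
        rw [Nat.add_sub_cancel_left, Finset.mem_range] at ht
        rw [Nat.mul_comm, Nat.add_comm, Nat.add_mul_mod_self_left, Nat.mod_eq_of_lt ht]
      rw [Finset.sum_congr rfl h, Nat.add_sub_cancel_left]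
      push_cast; ring

/-- If `∑_{i=1}^M k_i = L·N` with `0 < k_i ≤ N`, then there exist subspaces
`{W_i}_{i=1}^M` of `ℝ^N` with `dim W_i = k_i` doing norm retrieval. -/
theorem stmt_9 (N L M : ℕ) (hN : 0 < N) (hL : 0 < L) (hM : 0 < M)
    (k : Fin M → ℕ) (hk : ∀ i, 0 < k i) (hkN : ∀ i, k i ≤ N)
    (hsum : ∑ i : Fin M, k i = L * N) :
    ∃ W : Fin M → Submodule ℝ (EuclideanSpace ℝ (Fin N)),
      (∀ i, Module.finrank ℝ (W i) = k i) ∧ DoesNormRetrieval W := by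
  classical
  -- the extended length function and partial sums
  set kk : ℕ → ℕ := fun j => if h : j < M then k ⟨j, h⟩ else 0 with hkk
  set c : ℕ → ℕ := fun m => ∑ j ∈ Finset.range m, kk j with hc
  have hkk_eq : ∀ i : Fin M, kk (i : ℕ) = k i := fun i => dif_pos i.2
  have hcM : c M = L * N := by
    show (∑ j ∈ Finset.range M, kk j) = L * N
    rw [← Fin.sum_univ_eq_sum_range, ← hsum]
    exact Finset.sum_congr rfl fun i _ => hkk_eq i
  -- the mod-N map and index sets
  set φ : ℕ → Fin N := fun t => ⟨t % N, Nat.mod_lt t hN⟩ with hφ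
  have hφinj : ∀ i : Fin M, Set.InjOn φ (Finset.Ico (c i) (c i + k i)) := by
    intro i t₁ h₁ t₂ h₂ he
    simp only [Finset.coe_Ico, Set.mem_Ico] at h₁ h₂
    have hmod : t₁ % N = t₂ % N := by
      have := congrArg Fin.val he
      simpa [hφ] using this
    rcases le_total t₁ t₂ with hle | hle
    · have hdvd : N ∣ t₂ - t₁ := (Nat.modEq_iff_dvd' hle).mp hmod
      have hlt : t₂ - t₁ < N := by
        have := hkN i; omega
      have := Nat.eq_zero_of_dvd_of_lt hdvd hlt
      omega
    · have hdvd : N ∣ t₁ - t₂ := (Nat.modEq_iff_dvd' hle).mp hmod.symm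
      have hlt : t₁ - t₂ < N := by
        have := hkN i; omega
      have := Nat.eq_zero_of_dvd_of_lt hdvd hlt
      omega
  set S : Fin M → Finset (Fin N) := fun i => (Finset.Ico (c i) (c i + k i)).image φ with hS
  have hScard : ∀ i, (S i).card = k i := by
    intro i
    rw [hS]
    rw [Finset.card_image_of_injOn (hφinj i), Nat.card_Ico]
    omega
  -- the subspaces
  set v : Fin N → EuclideanSpace ℝ (Fin N) := fun j => EuclideanSpace.single j (1 : ℝ) with hv
  have hortho : Orthonormal ℝ v := EuclideanSpace.orthonormal_single
  set W : Fin M → Submodule ℝ (EuclideanSpace ℝ (Fin N)) :=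
    fun i => Submodule.span ℝ (((S i).image v : Finset (EuclideanSpace ℝ (Fin N))) :
      Set (EuclideanSpace ℝ (Fin N))) with hW
  obtain ⟨b, hbj⟩ : ∃ b : ∀ i : Fin M, OrthonormalBasis (S i) ℝ (W i),
      ∀ i : Fin M, ∀ j : S i, ((b i j : EuclideanSpace ℝ (Fin N))) = v j :=
    ⟨fun i => OrthonormalBasis.span hortho (S i),
      fun i j => OrthonormalBasis.span_apply hortho (S i) j⟩
  refine ⟨W, ?_, ?_⟩
  · intro i
    rw [Module.finrank_eq_card_basis (b i).toBasis, Fintype.card_coe, hScard]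
  · -- norm retrieval
    have key : ∀ x : EuclideanSpace ℝ (Fin N), ∑ i : Fin M, ‖Submodule.orthogonalProjectionOnto (W i) x‖ ^ 2 = L * ‖x‖ ^ 2 := by
      intro x
      set g : ℕ → ℝ := fun r => if h : r < N then x ⟨r, h⟩ ^ 2 else 0 with hg
      have step1 : ∀ i : Fin M,
          ‖Submodule.orthogonalProjectionOnto (W i) x‖ ^ 2
            = ∑ t ∈ Finset.Ico (c i) (c i + k i), g (t % N) := by
        intro i
        rw [aux_proj_norm_sq (b i) x]
        have h1 : ∑ j : S i, ⟪((b i) j : EuclideanSpace ℝ (Fin N)), x⟫ ^ 2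
            = ∑ j ∈ S i, x j ^ 2 := by
          rw [← Finset.sum_coe_sort (S i) (fun j => x j ^ 2)]
          refine Finset.sum_congr rfl fun j _ => ?_
          rw [hbj i j, hv]
          rw [EuclideanSpace.inner_single_left]
          simp
        rw [h1, hS, Finset.sum_image (hφinj i)]
        refine Finset.sum_congr rfl fun t _ => ?_
        rw [hg]
        simp only [dif_pos (Nat.mod_lt t hN)]
        rfl
      calc ∑ i : Fin M, ‖Submodule.orthogonalProjectionOnto (W i) x‖ ^ 2
          = ∑ i : Fin M, ∑ t ∈ Finset.Ico (c i) (c i + k i), g (t % N) :=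
            Finset.sum_congr rfl fun i _ => step1 i
        _ = ∑ i ∈ Finset.range M, ∑ t ∈ Finset.Ico (c i) (c i + kk i), g (t % N) := by
            rw [← Fin.sum_univ_eq_sum_range
              (fun i => ∑ t ∈ Finset.Ico (c i) (c i + kk i), g (t % N)) M]
            exact Finset.sum_congr rfl fun i _ => by rw [hkk_eq i]
        _ = ∑ t ∈ Finset.range (c M), g (t % N) :=
            aux_blocks_sum kk (fun t => g (t % N)) M
        _ = ∑ t ∈ Finset.range (L * N), g (t % N) := by rw [hcM]
        _ = L * ∑ r ∈ Finset.range N, g r := aux_periodic_sum N g L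
        _ = L * ‖x‖ ^ 2 := by
            congr 1
            rw [EuclideanSpace.norm_eq, Real.sq_sqrt (by positivity),
              ← Fin.sum_univ_eq_sum_range g N]
            refine Finset.sum_congr rfl fun j _ => ?_
            rw [hg]
            simp [Real.norm_eq_abs, sq_abs]
    intro x y hxy
    have h1 : (L : ℝ) * ‖x‖ ^ 2 = (L : ℝ) * ‖y‖ ^ 2 := by
      rw [← key x, ← key y]
      exact Finset.sum_congr rfl fun i _ => by rw [hxy i]
    have hL' : (0 : ℝ) < L := by exact_mod_cast hL
    have h2 : ‖x‖ ^ 2 = ‖y‖ ^ 2 := mul_left_cancel₀ (ne_of_gt hL') h1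
    rw [← Real.sqrt_sq (norm_nonneg x), ← Real.sqrt_sq (norm_nonneg y), h2]
end
end

section
/- Let {P_i}_{i=1}^M be orthogonal projections on a finite-dimensional real inner product space H. If there exist real numbers a_1,...,a_M such that ∑_{i=1}^M a_i P_i = I (the identity operator on H), then {P_i}_{i=1}^M does norm retrieval. -/
open scoped RealInnerProductSpace

noncomputable section

/-- If the orthogonal projections `{P_i}_{i=1}^M` onto subspaces `{W_i}_{i=1}^M` satisfy
`∑ a_i P_i = I` for some real numbers `a_i`, then `{P_i}_{i=1}^M` does norm retrieval. -/
theorem stmt_13 {H : Type*} [NormedAddCommGroup H] [InnerProductSpace ℝ H]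
    [FiniteDimensional ℝ H] {M : ℕ}
    (W : Fin M → Submodule ℝ H) (a : Fin M → ℝ)
    (hsum : ∑ i : Fin M, a i • ((W i).subtypeL ∘L Submodule.orthogonalProjectionOnto (W i)) =
      ContinuousLinearMap.id ℝ H) :
    DoesNormRetrieval W := by
  have key : ∀ z : H, ‖z‖ ^ 2 = ∑ i, a i * ‖Submodule.orthogonalProjectionOnto (W i) z‖ ^ 2 := by
    intro z
    have h1 : ((∑ i : Fin M, a i • ((W i).subtypeL ∘L Submodule.orthogonalProjectionOnto (W i))) z) = z := by
      rw [hsum]; rfl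
    have h2 : ⟪z, z⟫ = ∑ i, a i * ⟪(Submodule.orthogonalProjectionOnto (W i) z : H), z⟫ := by
      have h2' : ⟪z, z⟫ = ⟪(∑ i : Fin M, a i • ((W i).subtypeL ∘L Submodule.orthogonalProjectionOnto (W i))) z, z⟫ := by
        rw [h1]
      rw [h2', ContinuousLinearMap.sum_apply, sum_inner]
      refine Finset.sum_congr rfl fun i _ => ?_
      simp [real_inner_smul_left]
    have h3 : ∀ i, ⟪(Submodule.orthogonalProjectionOnto (W i) z : H), z⟫
        = ‖Submodule.orthogonalProjectionOnto (W i) z‖ ^ 2 := by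
      intro i
      have := Submodule.inner_orthogonalProjectionOnto_eq_of_mem_right (K := W i) (Submodule.orthogonalProjectionOnto (W i) z) z
      rw [Submodule.coe_inner, real_inner_self_eq_norm_sq] at this
      rw [real_inner_comm, ← this]; simp
    rw [← real_inner_self_eq_norm_sq, h2]
    exact Finset.sum_congr rfl fun i _ => by rw [h3]
  intro x y h
  have : ‖x‖ ^ 2 = ‖y‖ ^ 2 := by
    rw [key x, key y]
    exact Finset.sum_congr rfl fun i _ => by rw [h i]
  exact (sq_eq_sq₀ (norm_nonneg x) (norm_nonneg y)).mp (by simpa [sq] using this)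
end
end

section
/- Let {P_i}_{i=1}^L be orthogonal projections on a finite-dimensional real inner product space H. If there exist real numbers a_1,...,a_L such that ∑_{i=1}^L a_i P_i = I and ∑_{i=1}^L a_i ≠ 1, then the family of complementary projections {I - P_i}_{i=1}^L does norm retrieval. -/
open scoped RealInnerProductSpace

noncomputable section

lemma key_norm_sq {H : Type*} [NormedAddCommGroup H] [InnerProductSpace ℝ H]
    [FiniteDimensional ℝ H] {L : ℕ}
    (W : Fin L → Submodule ℝ H) (a : Fin L → ℝ)
    (hsum : ∑ i : Fin L, a i • ((W i).subtypeL ∘L Submodule.orthogonalProjectionOnto (W i)) =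
      ContinuousLinearMap.id ℝ H) (x : H) :
    ‖x‖ ^ 2 = ∑ i : Fin L, a i * ‖Submodule.orthogonalProjectionOnto (W i) x‖ ^ 2 := by
  have hx : ∑ i : Fin L, a i • (Submodule.orthogonalProjectionOnto (W i) x : H) = x := by
    have := congrArg (fun T : H →L[ℝ] H => T x) hsum
    simpa using this
  have : ⟪x, x⟫ = ∑ i : Fin L, a i * ⟪(Submodule.orthogonalProjectionOnto (W i) x : H), x⟫ := by
    nth_rewrite 1 [← hx]
    rw [sum_inner]
    simp [real_inner_smul_left]
  rw [← real_inner_self_eq_norm_sq, this]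
  refine Finset.sum_congr rfl fun i _ => ?_
  congr 1
  rw [real_inner_comm,
    ← Submodule.inner_orthogonalProjection_eq_of_mem_right (K := W i) (Submodule.orthogonalProjectionOnto (W i) x) x]
  exact real_inner_self_eq_norm_sq _

/-- If the orthogonal projections `{P_i}_{i=1}^L` onto subspaces `{W_i}_{i=1}^L` satisfy
`∑ a_i P_i = I` with `∑ a_i ≠ 1`, then the complementary projections `{I - P_i}_{i=1}^L`
(i.e. the orthogonal projections onto `{W_i^⊥}_{i=1}^L`) do norm retrieval. -/
theorem stmt_14 {H : Type*} [NormedAddCommGroup H] [InnerProductSpace ℝ H]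
    [FiniteDimensional ℝ H] {L : ℕ}
    (W : Fin L → Submodule ℝ H) (a : Fin L → ℝ)
    (hsum : ∑ i : Fin L, a i • ((W i).subtypeL ∘L Submodule.orthogonalProjectionOnto (W i)) =
      ContinuousLinearMap.id ℝ H)
    (ha : ∑ i : Fin L, a i ≠ 1) :
    DoesNormRetrieval (fun i => (W i)ᗮ) := by
  intro x y h
  have hPx : ∀ i : Fin L, ‖Submodule.orthogonalProjectionOnto (W i) x‖ ^ 2 =
      ‖x‖ ^ 2 - ‖Submodule.orthogonalProjectionOnto ((W i)ᗮ) x‖ ^ 2 := fun i => by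
    have := Submodule.norm_sq_eq_add_norm_sq_projection x (W i); linarith
  have hPy : ∀ i : Fin L, ‖Submodule.orthogonalProjectionOnto (W i) y‖ ^ 2 =
      ‖y‖ ^ 2 - ‖Submodule.orthogonalProjectionOnto ((W i)ᗮ) y‖ ^ 2 := fun i => by
    have := Submodule.norm_sq_eq_add_norm_sq_projection y (W i); linarith
  have kx := key_norm_sq W a hsum x
  have ky := key_norm_sq W a hsum y
  have hsq : ‖x‖ ^ 2 = ‖y‖ ^ 2 := by
    have e : ‖x‖ ^ 2 - ‖y‖ ^ 2 = (∑ i : Fin L, a i) * (‖x‖ ^ 2 - ‖y‖ ^ 2) := by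
      rw [Finset.sum_mul]
      have : ∀ i ∈ Finset.univ, a i * ‖Submodule.orthogonalProjectionOnto (W i) x‖ ^ 2
          - a i * ‖Submodule.orthogonalProjectionOnto (W i) y‖ ^ 2 = a i * (‖x‖ ^ 2 - ‖y‖ ^ 2) := by
        intro i _
        rw [hPx i, hPy i, h i]
        ring
      calc ‖x‖ ^ 2 - ‖y‖ ^ 2
          = ∑ i : Fin L, (a i * ‖Submodule.orthogonalProjectionOnto (W i) x‖ ^ 2
            - a i * ‖Submodule.orthogonalProjectionOnto (W i) y‖ ^ 2) := by
            rw [Finset.sum_sub_distrib, ← kx, ← ky]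
        _ = ∑ i : Fin L, a i * (‖x‖ ^ 2 - ‖y‖ ^ 2) := Finset.sum_congr rfl this
    by_contra hne
    have : (∑ i : Fin L, a i) = 1 := by
      field_simp at e
      rcases mul_eq_mul_right_iff.mp (by rw [← e] : (∑ i : Fin L, a i) * (‖x‖^2 - ‖y‖^2) = 1 * (‖x‖^2 - ‖y‖^2)) with h1 | h2
      · exact h1
      · exact absurd (by linarith : ‖x‖ ^ 2 = ‖y‖ ^ 2) hne
    exact ha this
  exact (sq_eq_sq₀ (norm_nonneg x) (norm_nonneg y)).mp hsq
end
end
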